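/- arXiv:2312.08684 — 2 statements merged into one kernel-verified Lean document; each statement's English description precedes it below -/
import Mathlib

section
/- Let f : ℝ^n → ℝ be differentiable with L-Lipschitz gradient for some L ≥ 0. Then for every s ∈ ℝ^n and every ε > 0, the Gaussian smoothing error satisfies the quantitative bound | ∫ f(x) φ_ε(x; s) dx − f(s) | ≤ (n L / 2) · ε. -/
open MeasureTheory Real

local notation "⟪" x ", " y "⟫" => @inner ℝ _ _ x y

section Aux

variable {E : Type*} [NormedAddCommGroup E] [InnerProductSpace ℝ E] [CompleteSpace E]

lemma gse_grad_inner (f : E → ℝ) (y v : E) : ⟪gradient f y, v⟫ = fderiv ℝ f y v := by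
  simp [gradient, InnerProductSpace.toDual_symm_apply]

lemma gse_taylor_quad {L : ℝ} (hL : 0 ≤ L) (f : E → ℝ) (hf : Differentiable ℝ f)
    (hlip : ∀ x y, ‖gradient f x - gradient f y‖ ≤ L * ‖x - y‖) (s x : E) :
    |f x - f s - ⟪gradient f s, x - s⟫| ≤ L / 2 * ‖x - s‖ ^ 2 := by
  set v := x - s with hv
  have hgradlip : LipschitzWith ⟨L, hL⟩ (gradient f) := by
    apply LipschitzWith.of_dist_le_mul
    intro a b
    rw [dist_eq_norm, dist_eq_norm]; exact hlip a b
  have hline : ∀ t : ℝ, HasDerivAt (fun t : ℝ => s + t • v) v t := by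
    intro t
    simpa using ((hasDerivAt_id t).smul_const v).const_add s
  have hd : ∀ t : ℝ, HasDerivAt (fun t : ℝ => f (s + t • v)) ⟪gradient f (s + t • v), v⟫ t := by
    intro t
    rw [gse_grad_inner]
    exact (hf (s + t • v)).hasFDerivAt.comp_hasDerivAt t (hline t)
  have hcont : Continuous fun t : ℝ => ⟪gradient f (s + t • v), v⟫ := by
    apply Continuous.inner _ continuous_const
    exact hgradlip.continuous.comp (by continuity)
  have hftc : f (s + (1:ℝ) • v) - f (s + (0:ℝ) • v)
      = ∫ t in (0:ℝ)..1, ⟪gradient f (s + t • v), v⟫ := by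
    rw [intervalIntegral.integral_eq_sub_of_hasDerivAt (fun t _ => hd t)
      (hcont.intervalIntegrable 0 1)]
  have h1 : f x - f s = ∫ t in (0:ℝ)..1, ⟪gradient f (s + t • v), v⟫ := by
    simpa [hv] using hftc
  have h2 : (⟪gradient f s, v⟫ : ℝ) = ∫ t in (0:ℝ)..1, ⟪gradient f s, v⟫ := by
    simp
  rw [h1, h2, ← intervalIntegral.integral_sub (hcont.intervalIntegrable 0 1)
    (intervalIntegrable_const)]
  have hbound : ∀ t ∈ Set.uIoc (0:ℝ) 1,
      ‖(⟪gradient f (s + t • v), v⟫ : ℝ) - ⟪gradient f s, v⟫‖ ≤ L * ‖v‖ ^ 2 * t := by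
    intro t ht
    rw [Set.uIoc_of_le zero_le_one] at ht
    have ht0 : 0 < t := ht.1
    have ht1 : t ≤ 1 := ht.2
    rw [← inner_sub_left]
    calc ‖(⟪gradient f (s + t • v) - gradient f s, v⟫ : ℝ)‖
        ≤ ‖gradient f (s + t • v) - gradient f s‖ * ‖v‖ := norm_inner_le_norm _ _
      _ ≤ (L * ‖(s + t • v) - s‖) * ‖v‖ := by
          gcongr; exact hlip _ _
      _ = L * ‖v‖ ^ 2 * t := by
          simp [norm_smul, abs_of_pos ht0]; ring
  have key := intervalIntegral.norm_integral_le_abs_of_norm_le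
    (f := fun t => (⟪gradient f (s + t • v), v⟫ : ℝ) - ⟪gradient f s, v⟫)
    (g := fun t => L * ‖v‖ ^ 2 * t) (μ := volume) (a := 0) (b := 1)
    ((ae_restrict_iff' measurableSet_uIoc).2 (Filter.Eventually.of_forall hbound))
    (Continuous.intervalIntegrable (by continuity) 0 1)
  rw [Real.norm_eq_abs] at key
  refine key.trans ?_
  rw [intervalIntegral.integral_const_mul, integral_id]
  rw [abs_of_nonneg (by positivity)]
  norm_num
  nlinarith [sq_nonneg ‖v‖, norm_nonneg v]

end Aux

lemma gse_integrable_sq_exp_1d {b : ℝ} (hb : 0 < b) :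
    Integrable (fun x : ℝ => x ^ 2 * Real.exp (-b * x ^ 2)) := by
  have := integrable_rpow_mul_exp_neg_mul_sq hb (s := 2) (by norm_num)
  refine this.congr (Filter.Eventually.of_forall fun x => ?_)
  norm_num [Real.rpow_natCast x 2]

lemma gse_integral_sq_exp_1d {b : ℝ} (hb : 0 < b) :
    ∫ x : ℝ, x ^ 2 * Real.exp (-b * x ^ 2) = √(π / b) / (2 * b) := by
  have hderiv : ∀ x : ℝ, HasDerivAt (fun x : ℝ => x * Real.exp (-b * x ^ 2))
      (Real.exp (-b * x ^ 2) - 2 * b * (x ^ 2 * Real.exp (-b * x ^ 2))) x := by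
    intro x
    have h1 : HasDerivAt (fun x : ℝ => -b * x ^ 2) (-b * (2 * x)) x := by
      simpa using ((hasDerivAt_pow 2 x).const_mul (-b))
    have h2 := (h1.exp)
    have := (hasDerivAt_id x).mul h2
    convert this using 1
    · rfl
    · rfl
    · rfl
    simp only [id]
    ring
  have hint : Integrable (fun x : ℝ => Real.exp (-b * x ^ 2)
      - 2 * b * (x ^ 2 * Real.exp (-b * x ^ 2))) :=
    (integrable_exp_neg_mul_sq hb).sub ((gse_integrable_sq_exp_1d hb).const_mul _)
  have hzero := integral_eq_zero_of_hasDerivAt_of_integrable hderiv hint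
    (integrable_mul_exp_neg_mul_sq hb)
  rw [integral_sub (integrable_exp_neg_mul_sq hb)
    ((gse_integrable_sq_exp_1d hb).const_mul _), integral_const_mul,
    integral_gaussian] at hzero
  have h2b : (2 : ℝ) * b ≠ 0 := by positivity
  field_simp at hzero ⊢
  linarith

lemma gse_integrable_exp_gauss {n : ℕ} {b : ℝ} (hb : 0 < b) :
    Integrable (fun y : EuclideanSpace ℝ (Fin n) => Real.exp (-b * ‖y‖ ^ 2)) := by
  have h := GaussianFourier.integrable_cexp_neg_mul_sq_norm_add
    (V := EuclideanSpace ℝ (Fin n)) (b := (b : ℂ)) (by simpa using hb) 0 0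
  have := h.re
  refine this.congr (Filter.Eventually.of_forall fun y => ?_)
  simp only
  rw [show (-(b:ℂ) * (‖y‖:ℂ) ^ 2 + 0 * ⟪(0 : EuclideanSpace ℝ (Fin n)), y⟫)
      = ((-b * ‖y‖^2 : ℝ) : ℂ) by push_cast; ring]
  exact Complex.exp_ofReal_re _

lemma gse_integrable_sq_exp_gauss {n : ℕ} {b : ℝ} (hb : 0 < b) :
    Integrable (fun y : EuclideanSpace ℝ (Fin n) => ‖y‖ ^ 2 * Real.exp (-b * ‖y‖ ^ 2)) := by
  have key : ∀ y : EuclideanSpace ℝ (Fin n),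
      ‖‖y‖ ^ 2 * Real.exp (-b * ‖y‖ ^ 2)‖ ≤ (2 / b) * Real.exp (-(b/2) * ‖y‖ ^ 2) := by
    intro y
    have h1 : (b/2) * ‖y‖^2 ≤ Real.exp ((b/2) * ‖y‖^2) := by
      have := Real.add_one_le_exp ((b/2) * ‖y‖^2)
      nlinarith [Real.exp_pos ((b/2) * ‖y‖^2)]
    have h2 : Real.exp (-b * ‖y‖^2) = Real.exp (-(b/2) * ‖y‖^2) * Real.exp (-(b/2) * ‖y‖^2) := by
      rw [← Real.exp_add]; ring_nf
    have h3 : ‖y‖^2 * Real.exp (-(b/2) * ‖y‖^2) ≤ 2 / b := by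
      rcases eq_or_lt_of_le (show (0:ℝ) ≤ ‖y‖^2 by positivity) with h | h
      · rw [← h]; simp; positivity
      · have hpos : 0 < (b/2) * ‖y‖^2 := by positivity
        rw [neg_mul, Real.exp_neg]
        calc ‖y‖^2 * (Real.exp ((b/2) * ‖y‖^2))⁻¹
            ≤ ‖y‖^2 * ((b/2) * ‖y‖^2)⁻¹ := by gcongr
          _ = 2 / b := by
            have hy : ‖y‖ ≠ 0 := fun h0 => by simp [h0] at h
            field_simp
    rw [norm_mul, norm_pow, norm_norm, Real.norm_eq_abs, abs_of_pos (Real.exp_pos _)]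
    calc ‖y‖^2 * Real.exp (-b * ‖y‖^2)
        = (‖y‖^2 * Real.exp (-(b/2)*‖y‖^2)) * Real.exp (-(b/2) * ‖y‖^2) := by rw [h2]; ring
      _ ≤ (2/b) * Real.exp (-(b/2) * ‖y‖^2) := by
          gcongr
  have key' : ∀ y : EuclideanSpace ℝ (Fin n), ‖‖y‖ ^ 2 * Real.exp (-b * ‖y‖ ^ 2)‖
      ≤ ‖(2 / b) * Real.exp (-(b/2) * ‖y‖ ^ 2)‖ := fun y => (key y).trans (by
        rw [Real.norm_eq_abs]; exact le_abs_self _)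
  refine Integrable.mono ((gse_integrable_exp_gauss (half_pos hb)).const_mul (2/b)) ?_
    (Filter.Eventually.of_forall key')
  apply Continuous.aestronglyMeasurable
  continuity

lemma gse_odd_moment_zero {n : ℕ} {b : ℝ} (w : EuclideanSpace ℝ (Fin n)) :
    ∫ y : EuclideanSpace ℝ (Fin n), ⟪w, y⟫ * Real.exp (-b * ‖y‖ ^ 2) = 0 := by
  have h := integral_neg_eq_self
    (fun y : EuclideanSpace ℝ (Fin n) => ⟪w, y⟫ * Real.exp (-b * ‖y‖ ^ 2)) volume
  simp only [inner_neg_right, norm_neg, neg_mul] at h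
  rw [integral_neg] at h
  simp only [neg_mul]
  linarith

lemma gse_second_moment_gauss {n : ℕ} {b : ℝ} (hb : 0 < b) :
    ∫ y : EuclideanSpace ℝ (Fin n), ‖y‖ ^ 2 * Real.exp (-b * ‖y‖ ^ 2)
      = (n : ℝ) * (√(π / b) / (2 * b)) * √(π / b) ^ (n - 1) := by
  classical
  have hequiv := (EuclideanSpace.volume_preserving_symm_measurableEquiv_toLp (Fin n)).symm
  rw [← hequiv.integral_comp (MeasurableEquiv.measurableEmbedding _)]
  have hnorm : ∀ v : Fin n → ℝ,
      ‖(MeasurableEquiv.toLp 2 (Fin n → ℝ)).symm.symm v‖ ^ 2 = ∑ i, v i ^ 2 := by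
    intro v
    rw [EuclideanSpace.norm_eq]
    rw [Real.sq_sqrt (by positivity)]
    simp [sq_abs]
  set g : Fin n → Fin n → ℝ → ℝ :=
    fun i j x => if j = i then x ^ 2 * Real.exp (-b * x ^ 2) else Real.exp (-b * x ^ 2) with hg
  have hsplit : ∀ v : Fin n → ℝ,
      (fun v : Fin n → ℝ => ‖(MeasurableEquiv.toLp 2 (Fin n → ℝ)).symm.symm v‖ ^ 2
        * Real.exp (-b * ‖(MeasurableEquiv.toLp 2 (Fin n → ℝ)).symm.symm v‖ ^ 2)) v
      = ∑ i, ∏ j, g i j (v j) := by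
    intro v
    simp only [hnorm]
    have hexp : Real.exp (-b * ∑ j, v j ^ 2) = ∏ j, Real.exp (-b * v j ^ 2) := by
      rw [← Real.exp_sum]
      congr 1
      rw [Finset.mul_sum]
    rw [hexp, Finset.sum_mul]
    refine Finset.sum_congr rfl fun i _ => ?_
    rw [← Finset.mul_prod_erase Finset.univ (fun j => g i j (v j)) (Finset.mem_univ i)]
    rw [← Finset.mul_prod_erase Finset.univ (fun j => Real.exp (-b * v j ^ 2)) (Finset.mem_univ i)]
    have herase : ∀ j ∈ Finset.univ.erase i, g i j (v j) = Real.exp (-b * v j ^ 2) := by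
      intro j hj
      simp only [hg]
      rw [if_neg (Finset.ne_of_mem_erase hj)]
    rw [Finset.prod_congr rfl herase]
    have hii : g i i (v i) = v i ^ 2 * Real.exp (-b * v i ^ 2) := by
      simp [hg]
    rw [hii]
    ring
  have hgint : ∀ i j, Integrable (g i j) := by
    intro i j
    rw [hg]
    by_cases h : j = i
    · simp only [if_pos h]
      exact gse_integrable_sq_exp_1d hb
    · simp only [if_neg h]
      exact integrable_exp_neg_mul_sq hb
  have hintegrable : ∀ i : Fin n, Integrable (fun v : Fin n → ℝ => ∏ j, g i j (v j)) :=
    fun i => Integrable.fintype_prod (fun j => hgint i j)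
  calc ∫ v : Fin n → ℝ, (fun v : Fin n → ℝ =>
          ‖(MeasurableEquiv.toLp 2 (Fin n → ℝ)).symm.symm v‖ ^ 2
        * Real.exp (-b * ‖(MeasurableEquiv.toLp 2 (Fin n → ℝ)).symm.symm v‖ ^ 2)) v
      = ∫ v : Fin n → ℝ, ∑ i, ∏ j, g i j (v j) := by
        refine integral_congr_ae (Filter.Eventually.of_forall fun v => ?_)
        exact hsplit v
    _ = ∑ i, ∫ v : Fin n → ℝ, ∏ j, g i j (v j) := by
        rw [integral_finset_sum _ (fun i _ => hintegrable i)]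
    _ = ∑ i : Fin n, (√(π / b) / (2 * b)) * √(π / b) ^ (n - 1) := by
        refine Finset.sum_congr rfl fun i _ => ?_
        rw [integral_fintype_prod_volume_eq_prod (f := g i)]
        rw [← Finset.mul_prod_erase Finset.univ _ (Finset.mem_univ i)]
        have h1 : ∫ x : ℝ, g i i x = √(π / b) / (2 * b) := by
          rw [hg]; simp only [if_pos rfl]
          exact gse_integral_sq_exp_1d hb
        have h2 : ∀ j ∈ Finset.univ.erase i, (∫ x : ℝ, g i j x) = √(π / b) := by
          intro j hj
          rw [hg]; simp only [if_neg (Finset.ne_of_mem_erase hj)]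
          exact integral_gaussian b
        rw [h1, Finset.prod_congr rfl h2, Finset.prod_const,
          Finset.card_erase_of_mem (Finset.mem_univ i), Finset.card_univ, Fintype.card_fin]
    _ = (n : ℝ) * (√(π / b) / (2 * b)) * √(π / b) ^ (n - 1) := by
        rw [Finset.sum_const, Finset.card_univ, Fintype.card_fin, nsmul_eq_mul]
        ring

/-- The isotropic Gaussian probability density on `ℝⁿ` with mean `s` and
covariance `ε I`:  `φ_ε(x; s) = (2πε)^(−n/2) exp(−‖x − s‖²/(2ε))`. -/
noncomputable def gaussPdf (n : ℕ) (ε : ℝ) (s x : EuclideanSpace ℝ (Fin n)) : ℝ :=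
  (2 * Real.pi * ε) ^ (-(n : ℝ) / 2) * Real.exp (-‖x - s‖ ^ 2 / (2 * ε))

/-- **Quantitative Gaussian smoothing bound.**  If `f : ℝⁿ → ℝ` is differentiable
with `L`-Lipschitz gradient, then for every `s` and every `ε > 0`,
`|∫ f(x) φ_ε(x; s) dx − f(s)| ≤ (n L / 2) ε`. -/
theorem gaussian_smoothing_error_bound (n : ℕ) (L : ℝ) (hL : 0 ≤ L)
    (f : EuclideanSpace ℝ (Fin n) → ℝ)
    (hf : Differentiable ℝ f)
    (hlip : ∀ x y, ‖gradient f x - gradient f y‖ ≤ L * ‖x - y‖)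
    (s : EuclideanSpace ℝ (Fin n)) (ε : ℝ) (hε : 0 < ε) :
    |(∫ x, f x * gaussPdf n ε s x) - f s| ≤ ((n : ℝ) * L / 2) * ε := by
  have hb : (0:ℝ) < (2*ε)⁻¹ := by positivity
  have hK : (0:ℝ) < 2*π*ε := by positivity
  set c : ℝ := (2*π*ε) ^ (-(n:ℝ)/2) with hc
  have hc0 : 0 < c := Real.rpow_pos_of_pos hK _
  set g := gradient f s with hgdef
  set e : EuclideanSpace ℝ (Fin n) → ℝ := fun y => Real.exp (-(2*ε)⁻¹ * ‖y‖^2) with he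
  set T : EuclideanSpace ℝ (Fin n) → ℝ := fun y => f (y + s) - f s - ⟪g, y⟫ with hT
  have hpdf : ∀ y : EuclideanSpace ℝ (Fin n), gaussPdf n ε s (y + s) = c * e y := by
    intro y
    rw [gaussPdf, add_sub_cancel_right, he]
    congr 1
    ring
  have htrans : (∫ x, f x * gaussPdf n ε s x)
      = ∫ y : EuclideanSpace ℝ (Fin n), f (y + s) * (c * e y) := by
    rw [← integral_add_right_eq_self (fun x => f x * gaussPdf n ε s x) s]
    refine integral_congr_ae (Filter.Eventually.of_forall fun y => ?_)
    simp only [hpdf]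
  have hTb : ∀ y, |T y| ≤ L/2 * ‖y‖^2 := by
    intro y
    have h := gse_taylor_quad hL f hf hlip s (y + s)
    rw [add_sub_cancel_right] at h
    simpa [hT, hgdef] using h
  -- continuity
  have hfc : Continuous f := hf.continuous
  have hec : Continuous e := by
    rw [he]; continuity
  have hTc : Continuous T := by
    rw [hT]
    refine ((hfc.comp (continuous_id.add continuous_const)).sub continuous_const).sub ?_
    exact continuous_const.inner continuous_id
  -- integrability
  have ie : Integrable (fun y : EuclideanSpace ℝ (Fin n) => c * e y) :=
    (gse_integrable_exp_gauss hb).const_mul c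
  have isq : Integrable (fun y : EuclideanSpace ℝ (Fin n) => ‖y‖^2 * e y) :=
    gse_integrable_sq_exp_gauss hb
  have hTbound : ∀ y : EuclideanSpace ℝ (Fin n),
      ‖T y * (c * e y)‖ ≤ (L/2 * c) * (‖y‖^2 * e y) := by
    intro y
    have he0 : 0 < e y := Real.exp_pos _
    rw [norm_mul, Real.norm_eq_abs, Real.norm_eq_abs,
      abs_of_pos (by positivity : (0:ℝ) < c * e y)]
    calc |T y| * (c * e y) ≤ (L/2 * ‖y‖^2) * (c * e y) := by
          apply mul_le_mul_of_nonneg_right (hTb y) (by positivity)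
      _ = (L/2 * c) * (‖y‖^2 * e y) := by ring
  have iT : Integrable (fun y : EuclideanSpace ℝ (Fin n) => T y * (c * e y)) := by
    refine Integrable.mono (isq.const_mul (L/2 * c))
      ((hTc.mul (continuous_const.mul hec)).aestronglyMeasurable)
      (Filter.Eventually.of_forall fun y => (hTbound y).trans ?_)
    rw [Real.norm_eq_abs]; exact le_abs_self _
  have ib : Integrable (fun y : EuclideanSpace ℝ (Fin n) => (1 + ‖y‖^2) * e y) := by
    have h := (gse_integrable_exp_gauss (n := n) hb).add isq
    refine h.congr (Filter.Eventually.of_forall fun y => ?_)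
    show e y + ‖y‖^2 * e y = (1 + ‖y‖^2) * e y
    rw [add_mul, one_mul]
  have iinner : Integrable (fun y : EuclideanSpace ℝ (Fin n) => ⟪g, y⟫ * (c * e y)) := by
    refine Integrable.mono (ib.const_mul ((‖g‖ + 1) * c))
      (((continuous_const.inner continuous_id).mul (continuous_const.mul hec)).aestronglyMeasurable)
      (Filter.Eventually.of_forall fun y => ?_)
    have he0 : 0 < e y := Real.exp_pos _
    rw [norm_mul, Real.norm_eq_abs, Real.norm_eq_abs,
      abs_of_pos (by positivity : (0:ℝ) < c * e y), Real.norm_eq_abs,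
      abs_of_pos (by positivity : (0:ℝ) < (‖g‖ + 1) * c * ((1 + ‖y‖^2) * e y))]
    have h1 : |(⟪g, y⟫ : ℝ)| ≤ ‖g‖ * ‖y‖ := abs_real_inner_le_norm g y
    have h2 : ‖y‖ ≤ 1 + ‖y‖^2 := by nlinarith [norm_nonneg y, sq_nonneg (‖y‖ - 1)]
    calc |(⟪g, y⟫ : ℝ)| * (c * e y) ≤ (‖g‖ * (1 + ‖y‖^2)) * (c * e y) := by
          apply mul_le_mul_of_nonneg_right _ (by positivity)
          exact h1.trans (by nlinarith [norm_nonneg g, norm_nonneg y])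
      _ ≤ ((‖g‖ + 1) * (1 + ‖y‖^2)) * (c * e y) := by
          gcongr
          linarith
      _ = (‖g‖ + 1) * c * ((1 + ‖y‖^2) * e y) := by ring
  have ifs : Integrable (fun y : EuclideanSpace ℝ (Fin n) => f s * (c * e y)) :=
    ie.const_mul (f s)
  -- split the integral
  have hsum : (∫ y : EuclideanSpace ℝ (Fin n), f (y + s) * (c * e y))
      = (∫ y : EuclideanSpace ℝ (Fin n), T y * (c * e y))
        + ((∫ y : EuclideanSpace ℝ (Fin n), ⟪g, y⟫ * (c * e y))
          + (∫ y : EuclideanSpace ℝ (Fin n), f s * (c * e y))) := by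
    have i23 : Integrable (fun y : EuclideanSpace ℝ (Fin n) =>
        ⟪g, y⟫ * (c * e y) + f s * (c * e y)) volume := iinner.add ifs
    rw [← integral_add iinner ifs, ← integral_add iT i23]
    refine integral_congr_ae (Filter.Eventually.of_forall fun y => ?_)
    simp only [hT]
    ring
  -- the three integrals
  have hfrk : (Module.finrank ℝ (EuclideanSpace ℝ (Fin n)) : ℝ) = (n : ℝ) := by
    rw [finrank_euclideanSpace_fin]
  have hKeq : π / (2*ε)⁻¹ = 2*π*ε := by
    field_simp
  have hG0 : (∫ y : EuclideanSpace ℝ (Fin n), e y) = (2*π*ε) ^ ((n:ℝ)/2) := by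
    have h := GaussianFourier.integral_rexp_neg_mul_sq_norm (V := EuclideanSpace ℝ (Fin n)) hb
    rw [he]
    simp only
    rw [h, hKeq, hfrk]
  have hcK : c * (2*π*ε) ^ ((n:ℝ)/2) = 1 := by
    rw [hc, ← Real.rpow_add hK, show -(n:ℝ)/2 + (n:ℝ)/2 = 0 by ring, Real.rpow_zero]
  have hfs : (∫ y : EuclideanSpace ℝ (Fin n), f s * (c * e y)) = f s := by
    rw [integral_const_mul, integral_const_mul, hG0, hcK, mul_one]
  have hinner0 : (∫ y : EuclideanSpace ℝ (Fin n), ⟪g, y⟫ * (c * e y)) = 0 := by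
    have heq : (fun y : EuclideanSpace ℝ (Fin n) => ⟪g, y⟫ * (c * e y))
        = fun y => c * (⟪g, y⟫ * e y) := by
      funext y
      ring
    rw [heq, integral_const_mul]
    rw [he]
    simp only
    rw [gse_odd_moment_zero (b := (2*ε)⁻¹) g, mul_zero]
  -- quantitative bound on the Taylor remainder term
  have hG2 : (∫ y : EuclideanSpace ℝ (Fin n), ‖y‖^2 * e y)
      = (n : ℝ) * (√(π / (2*ε)⁻¹) / (2 * (2*ε)⁻¹)) * √(π / (2*ε)⁻¹) ^ (n - 1) :=
    gse_second_moment_gauss hb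
  have hcG2 : c * ((n : ℝ) * (√(π / (2*ε)⁻¹) / (2 * (2*ε)⁻¹)) * √(π / (2*ε)⁻¹) ^ (n - 1))
      = (n : ℝ) * ε := by
    rw [hKeq]
    have h2b : 2 * (2*ε)⁻¹ = ε⁻¹ := by
      field_simp
    rw [h2b, div_eq_mul_inv, inv_inv]
    rcases n with _ | m
    · simp
    · have hexp0 : -((m:ℝ)+1)/2 + ((m:ℝ)+1) * (1/2) = 0 := by ring
      have hsqpow : c * √(2*π*ε) ^ (m+1) = 1 := by
        rw [Real.sqrt_eq_rpow, ← Real.rpow_natCast ((2*π*ε) ^ ((1:ℝ)/2)) (m+1),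
          ← Real.rpow_mul hK.le, hc, ← Real.rpow_add hK]
        rw [show -(((m+1):ℕ):ℝ)/2 + 1/2 * (((m+1):ℕ):ℝ) = 0 by push_cast; ring,
          Real.rpow_zero]
      calc c * ((↑(m+1) : ℝ) * (√(2*π*ε) * ε) * √(2*π*ε) ^ (m + 1 - 1))
          = ((↑(m+1) : ℝ) * ε) * (c * (√(2*π*ε) * √(2*π*ε) ^ m)) := by
            rw [Nat.add_sub_cancel]; ring
        _ = ((↑(m+1) : ℝ) * ε) * (c * √(2*π*ε) ^ (m+1)) := by rw [pow_succ']
        _ = (↑(m+1) : ℝ) * ε := by rw [hsqpow, mul_one]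
  have hrem : |∫ y : EuclideanSpace ℝ (Fin n), T y * (c * e y)| ≤ (L/2) * ((n:ℝ) * ε) := by
    have hb1 := norm_integral_le_of_norm_le (μ := volume) (isq.const_mul (L/2*c))
      (Filter.Eventually.of_forall hTbound)
    rw [Real.norm_eq_abs] at hb1
    refine hb1.trans (le_of_eq ?_)
    rw [integral_const_mul, hG2]
    calc (L/2*c) * ((n : ℝ) * (√(π / (2*ε)⁻¹) / (2 * (2*ε)⁻¹)) * √(π / (2*ε)⁻¹) ^ (n - 1))
        = L/2 * (c * ((n : ℝ) * (√(π / (2*ε)⁻¹) / (2 * (2*ε)⁻¹)) * √(π / (2*ε)⁻¹) ^ (n - 1))) := by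
          ring
      _ = L/2 * ((n:ℝ) * ε) := by rw [hcG2]
  rw [htrans, hsum, hinner0, hfs]
  rw [show (∫ y : EuclideanSpace ℝ (Fin n), T y * (c * e y)) + (0 + f s) - f s
      = ∫ y : EuclideanSpace ℝ (Fin n), T y * (c * e y) by ring]
  refine hrem.trans_eq ?_
  ring
end

section
/- Fix integers N ≥ 1 and T ≥ 1, initial scores a : Fin N → ℝ and transition scores b_t : Fin N × Fin N → ℝ for t = 2,…,T, and define φ_1(i) = a(i) and φ_t(i) = max_{j ∈ Fin N} ( b_t(j, i) + φ_{t−1}(j) ) for 2 ≤ t ≤ T. Suppose ψ_t : Fin N → Fin N satisfies ψ_t(i) ∈ argmax_{j ∈ Fin N} ( b_t(j, i) + φ_{t−1}(j) ) for each 2 ≤ t ≤ T and i, let i_T ∈ argmax_{i ∈ Fin N} φ_T(i), and define the backtracked indices i_{t} = ψ_{t+1}(i_{t+1}) for t = T−1, …, 1. Then the backtracked path (i_1, …, i_T) attains the global maximum of the path score: a(i_1) + Σ_{t=2}^T b_t(i_{t−1}, i_t) = max over all (j_1,…,j_T) ∈ (Fin N)^T of a(j_1) + Σ_{t=2}^T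 b_t(j_{t−1}, j_t). -/
/-- The Viterbi value function, defined by the forward recursion
`φ_1(i) = a(i)` and `φ_t(i) = max_j (b_t(j, i) + φ_{t-1}(j))` for `t ≥ 2`
(the maximum over the nonempty finite type `Fin N` is expressed as `⨆ j`). -/
noncomputable def viterbiValue (N : ℕ) (a : Fin N → ℝ) (b : ℕ → Fin N → Fin N → ℝ) :
    ℕ → Fin N → ℝ
  | 0 => a
  | 1 => a
  | t + 2 => fun i => ⨆ j : Fin N, (b (t + 2) j i + viterbiValue N a b (t + 1) j)

lemma viterbi_pathScore_le (N : ℕ) (hN : 1 ≤ N) (a : Fin N → ℝ)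
    (b : ℕ → Fin N → Fin N → ℝ) (j : ℕ → Fin N) :
    ∀ T, 1 ≤ T →
      a (j 1) + ∑ t ∈ Finset.Icc 2 T, b t (j (t - 1)) (j t) ≤
        viterbiValue N a b T (j T) := by
  haveI : Nonempty (Fin N) := ⟨⟨0, hN⟩⟩
  intro T hT
  induction T, hT using Nat.le_induction with
  | base =>
    simp [viterbiValue, show Finset.Icc 2 1 = (∅ : Finset ℕ) by decide]
  | succ n hn ih =>
    rw [Finset.sum_Icc_succ_top (by omega : 2 ≤ n + 1)]
    have h1 : a (j 1) + (∑ t ∈ Finset.Icc 2 n, b t (j (t - 1)) (j t)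
        + b (n + 1) (j (n + 1 - 1)) (j (n + 1)))
        ≤ viterbiValue N a b n (j n) + b (n + 1) (j n) (j (n + 1)) := by
      have := ih
      simp only [Nat.add_sub_cancel]
      linarith
    refine h1.trans ?_
    obtain ⟨s, rfl⟩ : ∃ s, n = s + 1 := ⟨n - 1, by omega⟩
    show _ ≤ ⨆ k : Fin N, (b (s + 2) k (j (s + 2)) + viterbiValue N a b (s + 1) k)
    rw [add_comm]
    exact le_ciSup (f := fun k : Fin N => b (s + 2) k (j (s + 2)) + viterbiValue N a b (s + 1) k)
      (Set.Finite.bddAbove (Set.finite_range _)) (j (s + 1))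

lemma viterbi_backtrack_eq (N : ℕ) (hN : 1 ≤ N) (a : Fin N → ℝ)
    (b : ℕ → Fin N → Fin N → ℝ) (ψ : ℕ → Fin N → Fin N) (p : ℕ → Fin N) :
    ∀ T, 1 ≤ T →
      (∀ t, 2 ≤ t → t ≤ T → ∀ i j,
        b t j i + viterbiValue N a b (t - 1) j ≤
          b t (ψ t i) i + viterbiValue N a b (t - 1) (ψ t i)) →
      (∀ t, 1 ≤ t → t < T → p t = ψ (t + 1) (p (t + 1))) →
      a (p 1) + ∑ t ∈ Finset.Icc 2 T, b t (p (t - 1)) (p t) =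
        viterbiValue N a b T (p T) := by
  haveI : Nonempty (Fin N) := ⟨⟨0, hN⟩⟩
  intro T hT
  induction T, hT using Nat.le_induction with
  | base =>
    intro _ _
    simp [viterbiValue, show Finset.Icc 2 1 = (∅ : Finset ℕ) by decide]
  | succ n hn ih =>
    intro hψ hback
    rw [Finset.sum_Icc_succ_top (by omega : 2 ≤ n + 1)]
    have hrec := ih (fun t h1 h2 => hψ t h1 (by omega))
      (fun t h1 h2 => hback t h1 (by omega))
    have hpn : p n = ψ (n + 1) (p (n + 1)) := hback n hn (by omega)
    obtain ⟨s, rfl⟩ : ∃ s, n = s + 1 := ⟨n - 1, by omega⟩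
    have hφ : viterbiValue N a b (s + 2) (p (s + 2)) =
        b (s + 2) (p (s + 1)) (p (s + 2)) + viterbiValue N a b (s + 1) (p (s + 1)) := by
      show (⨆ k : Fin N, (b (s + 2) k (p (s + 2)) + viterbiValue N a b (s + 1) k)) = _
      apply le_antisymm
      · apply ciSup_le
        intro k
        have := hψ (s + 2) (by omega) le_rfl (p (s + 2)) k
        simpa [Nat.add_sub_cancel, ← hpn] using this
      · exact le_ciSup (f := fun k : Fin N => b (s + 2) k (p (s + 2)) + viterbiValue N a b (s + 1) k)
          (Set.Finite.bddAbove (Set.finite_range _)) (p (s + 1))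
    simp only [Nat.add_sub_cancel] at *
    rw [hφ]
    linarith

/-- **Correctness of Viterbi backtracking.**  Suppose `ψ_t(i)` is an argmax of
`j ↦ b_t(j, i) + φ_{t-1}(j)` for each `2 ≤ t ≤ T` and `i`, `i_T` is an argmax of
`φ_T`, and `p` is the backtracked path, i.e. `p T = i_T` and
`p t = ψ_{t+1}(p (t+1))` for `1 ≤ t < T`.  Then the path `(p 1, …, p T)` attains
the global maximum of the path score
`a(i_1) + Σ_{t=2}^T b_t(i_{t-1}, i_t)` over all paths `(i_1, …, i_T)`. -/
theorem viterbi_backtracking_correct (N T : ℕ) (hN : 1 ≤ N) (hT : 1 ≤ T)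
    (a : Fin N → ℝ) (b : ℕ → Fin N → Fin N → ℝ)
    (ψ : ℕ → Fin N → Fin N)
    (hψ : ∀ t, 2 ≤ t → t ≤ T → ∀ i j,
      b t j i + viterbiValue N a b (t - 1) j ≤
        b t (ψ t i) i + viterbiValue N a b (t - 1) (ψ t i))
    (iT : Fin N) (hiT : ∀ i, viterbiValue N a b T i ≤ viterbiValue N a b T iT)
    (p : ℕ → Fin N) (hpT : p T = iT)
    (hback : ∀ t, 1 ≤ t → t < T → p t = ψ (t + 1) (p (t + 1))) :
    IsGreatest
      {x : ℝ | ∃ j : ℕ → Fin N, x = a (j 1) + ∑ t ∈ Finset.Icc 2 T, b t (j (t - 1)) (j t)}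
      (a (p 1) + ∑ t ∈ Finset.Icc 2 T, b t (p (t - 1)) (p t)) := by
  constructor
  · exact ⟨p, rfl⟩
  · rintro x ⟨j, rfl⟩
    have h1 := viterbi_pathScore_le N hN a b j T hT
    have h2 := hiT (j T)
    have h3 := viterbi_backtrack_eq N hN a b ψ p T hT hψ hback
    rw [hpT] at h3
    linarith
end
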